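/- Let n ≥ 1 and let R : ℂⁿ × ℂⁿ × ℂⁿ × ℂⁿ → ℂ be a curvature-type form satisfying the Hermitian symmetry conj( R(X, Y, Z, W) ) = R(Y, X, W, Z) for all X, Y, Z, W ∈ ℂⁿ. Then the following are equivalent: (a) R(v, v, v, v) = 0 for every vector v ∈ ℂⁿ; (b) for every orthonormal basis (e₁, …, eₙ) of ℂⁿ and every vector b ∈ ℝⁿ with b_i ≥ 0 for all i, one has Σ_{i,k=1}^{n} Re( R(e_i, e_i, e_k, e_k) + R(e_i, e_k, e_k, e_i) ) b_i b_k = 0. -/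

import Mathlib

open scoped ComplexConjugate BigOperators

/-- A curvature-type form on `ℂⁿ`: ℂ-linear in the 1st and 3rd arguments and
conjugate-linear (additive, with `R(…, c•X, …) = conj c * R(…, X, …)`) in the
2nd and 4th arguments. -/
structure CurvatureForm (n : ℕ) where
  R : EuclideanSpace ℂ (Fin n) → EuclideanSpace ℂ (Fin n) → EuclideanSpace ℂ (Fin n) →
      EuclideanSpace ℂ (Fin n) → ℂ
  add_fst : ∀ X X' Y Z W, R (X + X') Y Z W = R X Y Z W + R X' Y Z W
  smul_fst : ∀ (c : ℂ) (X Y Z W), R (c • X) Y Z W = c * R X Y Z W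
  add_snd : ∀ X Y Y' Z W, R X (Y + Y') Z W = R X Y Z W + R X Y' Z W
  smul_snd : ∀ (c : ℂ) (X Y Z W), R X (c • Y) Z W = conj c * R X Y Z W
  add_trd : ∀ X Y Z Z' W, R X Y (Z + Z') W = R X Y Z W + R X Y Z' W
  smul_trd : ∀ (c : ℂ) (X Y Z W), R X Y (c • Z) W = c * R X Y Z W
  add_fth : ∀ X Y Z W W', R X Y Z (W + W') = R X Y Z W + R X Y Z W'
  smul_fth : ∀ (c : ℂ) (X Y Z W), R X Y Z (c • W) = conj c * R X Y Z W

lemma mixMA {n : ℕ} (R : CurvatureForm n) (h0 : ∀ v : EuclideanSpace ℂ (Fin n), R.R v v v v = 0)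
    (u w : EuclideanSpace ℂ (Fin n)) :
    R.R w u w u + R.R u w u w +
      (R.R w w u u + R.R w u u w + R.R u w w u + R.R u u w w) = 0 := by
  have h1 := h0 (u + w)
  have h3 := h0 (u + (-1 : ℂ) • w)
  simp only [R.add_fst, R.add_snd, R.add_trd, R.add_fth, R.smul_fst, R.smul_snd, R.smul_trd,
    R.smul_fth, map_neg, map_one] at h1 h3
  linear_combination (h1 + h3) / 2 - h0 u - h0 w

lemma mixA {n : ℕ} (R : CurvatureForm n) (h0 : ∀ v : EuclideanSpace ℂ (Fin n), R.R v v v v = 0)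
    (u w : EuclideanSpace ℂ (Fin n)) :
    R.R w w u u + R.R w u u w + R.R u w w u + R.R u u w w = 0 := by
  have h1 := mixMA R h0 u w
  have h2 := mixMA R h0 u (Complex.I • w)
  simp only [R.smul_fst, R.smul_snd, R.smul_trd, R.smul_fth, Complex.conj_I] at h2
  linear_combination (h1 + h2) / 2 +
    ((R.R w w u u + R.R w u u w + R.R u w w u + R.R u u w w -
      (R.R w u w u + R.R u w u w)) / 2) * Complex.I_mul_I


/-- Characterization of `HSC = 0` (paper, §2): under the Hermitian symmetry
`conj (R X Y Z W) = R Y X W Z`, vanishing of `R(v,v,v,v)` for every vector is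
equivalent to vanishing of the quadratic form
`Σ Re(R(eᵢ,eᵢ,e_k,e_k) + R(eᵢ,e_k,e_k,eᵢ)) bᵢ b_k` on nonnegative vectors,
in every unitary frame. -/
theorem stmt6 (n : ℕ) (hn : 1 ≤ n) (R : CurvatureForm n)
    (hsym : ∀ X Y Z W, conj (R.R X Y Z W) = R.R Y X W Z) :
    (∀ v : EuclideanSpace ℂ (Fin n), R.R v v v v = 0) ↔
      (∀ (e : OrthonormalBasis (Fin n) ℂ (EuclideanSpace ℂ (Fin n))) (b : Fin n → ℝ),
        (∀ i, 0 ≤ b i) →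
          ∑ i, ∑ k,
            (R.R (e i) (e i) (e k) (e k) + R.R (e i) (e k) (e k) (e i)).re *
              b i * b k = 0) := by
  constructor
  · intro h0 e b _
    have hA : ∀ i k : Fin n,
        (R.R (e k) (e k) (e i) (e i)).re + 2 * (R.R (e i) (e k) (e k) (e i)).re +
          (R.R (e i) (e i) (e k) (e k)).re = 0 := by
      intro i k
      have hM := mixA R h0 (e i) (e k)
      have hre : (R.R (e k) (e i) (e i) (e k)).re = (R.R (e i) (e k) (e k) (e i)).re := by
        rw [← hsym (e i) (e k) (e k) (e i), Complex.conj_re]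
      have := congrArg Complex.re hM
      simp only [Complex.add_re, Complex.zero_re] at this
      linarith [this, hre]
    have hpt : ∀ i k : Fin n,
        (R.R (e k) (e k) (e i) (e i)).re * (b i * b k) +
          ((R.R (e i) (e k) (e k) (e i)).re * (b i * b k) +
            ((R.R (e i) (e k) (e k) (e i)).re * (b i * b k) +
              (R.R (e i) (e i) (e k) (e k)).re * (b i * b k))) = 0 := by
      intro i k
      linear_combination (b i * b k) * hA i k
    have hsum :
        (∑ i, ∑ k, (R.R (e k) (e k) (e i) (e i)).re * (b i * b k)) +
          ((∑ i, ∑ k, (R.R (e i) (e k) (e k) (e i)).re * (b i * b k)) +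
            ((∑ i, ∑ k, (R.R (e i) (e k) (e k) (e i)).re * (b i * b k)) +
              (∑ i, ∑ k, (R.R (e i) (e i) (e k) (e k)).re * (b i * b k)))) = 0 := by
      simp only [← Finset.sum_add_distrib]
      exact Finset.sum_eq_zero fun i _ => Finset.sum_eq_zero fun k _ => hpt i k
    have hswap :
        (∑ i, ∑ k, (R.R (e k) (e k) (e i) (e i)).re * (b i * b k)) =
          ∑ i, ∑ k, (R.R (e i) (e i) (e k) (e k)).re * (b i * b k) := by
      rw [Finset.sum_comm]
      exact Finset.sum_congr rfl fun i _ => Finset.sum_congr rfl fun k _ => by ring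
    have hS : (∑ i, ∑ k,
          (R.R (e i) (e i) (e k) (e k) + R.R (e i) (e k) (e k) (e i)).re * b i * b k) =
        (∑ i, ∑ k, (R.R (e i) (e i) (e k) (e k)).re * (b i * b k)) +
          (∑ i, ∑ k, (R.R (e i) (e k) (e k) (e i)).re * (b i * b k)) := by
      rw [← Finset.sum_add_distrib]
      refine Finset.sum_congr rfl fun i _ => ?_
      rw [← Finset.sum_add_distrib]
      refine Finset.sum_congr rfl fun k _ => ?_
      rw [Complex.add_re]; ring
    rw [hS]
    linarith [hsum, hswap]
  · intro h v
    rcases eq_or_ne v 0 with rfl | hv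
    · have := R.smul_fst 0 0 0 0 0
      simpa using this
    · have hnorm : ‖v‖ ≠ 0 := norm_ne_zero_iff.mpr hv
      set u : EuclideanSpace ℂ (Fin n) := (‖v‖ : ℂ)⁻¹ • v with hu
      have hun : ‖u‖ = 1 := by
        rw [hu, norm_smul]
        simp [norm_inv, hnorm]
      -- extend u to an orthonormal basis
      have hcard : Module.finrank ℂ (EuclideanSpace ℂ (Fin n)) = Fintype.card (Fin n) := by
        simp [finrank_euclideanSpace]
      have i0 : Fin n := ⟨0, hn⟩
      have horth : Orthonormal ℂ (({i0} : Set (Fin n)).restrict (fun _ => u)) := by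
        constructor
        · intro j; exact hun
        · intro j k hjk
          exfalso
          exact hjk (Subtype.ext (by
            have hj := j.2; have hk := k.2
            simp only [Set.mem_singleton_iff] at hj hk
            rw [hj, hk]))
      obtain ⟨e, he⟩ := horth.exists_orthonormalBasis_extension_of_card_eq hcard
      have he0 : e i0 = u := he i0 (Set.mem_singleton i0)
      have hb := h e (fun i => if i = i0 then 1 else 0) (fun i => by positivity)
      simp only [Finset.sum_ite_eq', Finset.mem_univ, if_true, mul_ite, mul_one, mul_zero,
        ite_mul, one_mul, zero_mul, Finset.sum_ite_eq, Finset.sum_ite_irrel,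
        Finset.sum_const_zero] at hb
      -- hb should reduce to 2 * Re R(u,u,u,u) = 0
      rw [he0] at hb
      rw [Complex.add_re] at hb
      have hre : (R.R u u u u).re = 0 := by linarith
      have him : (R.R u u u u).im = 0 := Complex.conj_eq_iff_im.mp (hsym u u u u)
      have hu0 : R.R u u u u = 0 := by
        apply Complex.ext <;> simp [hre, him]
      have hveq : v = (‖v‖ : ℂ) • u := by
        rw [hu, smul_smul, mul_inv_cancel₀ (by exact_mod_cast hnorm), one_smul]
      rw [hveq, R.smul_fst, R.smul_snd, R.smul_trd, R.smul_fth, hu0]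
      ring
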